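/- arXiv:1602.00291 — 2 statements merged into one kernel-verified Lean document; each statement's English description precedes it below -/
import Mathlib

section
/- For the wheel graph W_{1,n} with n ≥ 5, the edge metric dimension equals n − 1. -/
open SimpleGraph

/-- Distance from a vertex `v` to an edge `e = uw`: `min (d v u) (d v w)`. -/
noncomputable def edgeDist {V : Type*} (G : SimpleGraph V) (v : V) (e : Sym2 V) : ℕ :=
  Sym2.lift ⟨fun u w => min (G.dist v u) (G.dist v w), fun u w => by simp [min_comm]⟩ e

/-- `S` is an edge metric generator: every two distinct edges are distinguished
by some vertex of `S`. -/
def IsEdgeMetricGenerator {V : Type*} (G : SimpleGraph V) (S : Set V) : Prop :=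
  ∀ e₁ ∈ G.edgeSet, ∀ e₂ ∈ G.edgeSet, e₁ ≠ e₂ →
    ∃ v ∈ S, edgeDist G v e₁ ≠ edgeDist G v e₂

/-- The edge metric dimension: minimum cardinality of an edge metric generator. -/
noncomputable def edim {V : Type*} (G : SimpleGraph V) : ℕ :=
  sInf {k | ∃ S : Finset V, S.card = k ∧ IsEdgeMetricGenerator G ↑S}

/-- The wheel graph `W₁,ₙ`: a cycle on `n` vertices plus a central vertex
(`none`) adjacent to every cycle vertex. -/
def wheelGraph (n : ℕ) : SimpleGraph (Option (Fin n)) :=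
  SimpleGraph.fromRel fun x y =>
    x = none ∨ ∃ i j : Fin n, x = some i ∧ y = some j ∧ (cycleGraph n).Adj i j

/-! ### Auxiliary lemmas -/

section Aux

variable {n : ℕ}

lemma wheel_adj_hub (i : Fin n) : (wheelGraph n).Adj none (some i) := by
  rw [wheelGraph, fromRel_adj]
  exact ⟨by simp, Or.inl (Or.inl rfl)⟩

lemma wheel_adj_some {i j : Fin n} :
    (wheelGraph n).Adj (some i) (some j) ↔ (cycleGraph n).Adj i j := by
  rw [wheelGraph, fromRel_adj]
  constructor
  · rintro ⟨hne, (h | ⟨a, b, ha, hb, hadj⟩) | (h | ⟨a, b, ha, hb, hadj⟩)⟩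
    · exact absurd h (by simp)
    · obtain rfl := Option.some_injective _ ha
      obtain rfl := Option.some_injective _ hb
      exact hadj
    · exact absurd h (by simp)
    · obtain rfl := Option.some_injective _ ha
      obtain rfl := Option.some_injective _ hb
      exact hadj.symm
  · intro h
    exact ⟨by simpa using h.ne, Or.inl (Or.inr ⟨i, j, rfl, rfl, h⟩)⟩

lemma edgeDist_mk {V : Type*} (G : SimpleGraph V) (v a b : V) :
    edgeDist G v s(a, b) = min (G.dist v a) (G.dist v b) := rfl

lemma wheel_dist_hub' (i : Fin n) : (wheelGraph n).dist (some i) none = 1 :=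
  dist_eq_one_iff_adj.mpr (wheel_adj_hub i).symm

lemma wheel_dist_pos {k i : Fin n} (hne : k ≠ i) :
    0 < (wheelGraph n).dist (some k) (some i) := by
  exact ((wheel_adj_hub k).symm.reachable.trans (wheel_adj_hub i).reachable).pos_dist_of_ne
    (by simpa using hne)

lemma wheel_dist_far {k i : Fin n} (hne : k ≠ i) (h : ¬(cycleGraph n).Adj k i) :
    (wheelGraph n).dist (some k) (some i) = 2 := by
  have hle : (wheelGraph n).dist (some k) (some i) ≤ 2 := by
    have := dist_le (Walk.cons (wheel_adj_hub k).symm (Walk.cons (wheel_adj_hub i) Walk.nil))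
    simpa using this
  have hpos : 0 < (wheelGraph n).dist (some k) (some i) := wheel_dist_pos hne
  have h1 : (wheelGraph n).dist (some k) (some i) ≠ 1 := by
    rw [Ne, dist_eq_one_iff_adj, wheel_adj_some]; exact h
  omega

lemma ed_none_spoke (i : Fin n) : edgeDist (wheelGraph n) none s(none, some i) = 0 := by
  rw [edgeDist_mk, dist_self]; simp

lemma ed_some_spoke_self (i : Fin n) :
    edgeDist (wheelGraph n) (some i) s(none, some i) = 0 := by
  rw [edgeDist_mk, dist_self]; simp

lemma ed_some_spoke {k i : Fin n} (h : k ≠ i) :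
    edgeDist (wheelGraph n) (some k) s(none, some i) = 1 := by
  rw [edgeDist_mk, wheel_dist_hub']
  have := wheel_dist_pos h
  omega

lemma ed_cyc_left {a b : Fin n} :
    edgeDist (wheelGraph n) (some a) s(some a, some b) = 0 := by
  rw [edgeDist_mk, dist_self]; simp

lemma ed_cyc_right {a b : Fin n} :
    edgeDist (wheelGraph n) (some b) s(some a, some b) = 0 := by
  rw [edgeDist_mk, dist_self]; simp

lemma ed_cyc_pos {k a b : Fin n} (ha : k ≠ a) (hb : k ≠ b) :
    0 < edgeDist (wheelGraph n) (some k) s(some a, some b) := by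
  rw [edgeDist_mk]
  exact lt_min (wheel_dist_pos ha) (wheel_dist_pos hb)

lemma ed_cyc_two {k a b : Fin n} (ha : k ≠ a) (hb : k ≠ b)
    (hca : ¬(cycleGraph n).Adj k a) (hcb : ¬(cycleGraph n).Adj k b) :
    edgeDist (wheelGraph n) (some k) s(some a, some b) = 2 := by
  rw [edgeDist_mk, wheel_dist_far ha hca, wheel_dist_far hb hcb]; simp

open Fin.CommRing in
lemma fin_helper (hn : 5 ≤ n) {a b : Fin n} (h : (cycleGraph n).Adj a b) :
    ∃ k : Fin n, k ≠ a ∧ k ≠ b ∧ ¬(cycleGraph n).Adj k a ∧ ¬(cycleGraph n).Adj k b := by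
  haveI : NeZero n := ⟨by omega⟩
  rw [cycleGraph_adj'] at h
  set d := a - b with hd
  have hba : b - a = -d := by rw [hd]; ring
  have hneg : ∀ x : Fin n, (-x).val = (n - x.val) % n := by
    intro x; rw [Fin.neg_def]
  have hdval : d.val = 1 ∨ d.val = n - 1 := by
    rcases h with h | h
    · exact Or.inl h
    · rw [hba, hneg] at h
      right
      rcases Nat.eq_zero_or_pos d.val with h0 | h0
      · rw [h0, Nat.sub_zero, Nat.mod_self] at h; omega
      · have : d.val < n := d.isLt
        rw [Nat.mod_eq_of_lt (by omega)] at h; omega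
  refine ⟨a + d + d, ?_⟩
  have hka : (a + d + d) - a = d + d := by ring
  have hkb : (a + d + d) - b = d + d + d := by rw [hd]; ring
  have hak : a - (a + d + d) = -(d + d) := by ring
  have hbk : b - (a + d + d) = -(d + d + d) := by rw [hd]; ring
  have key : ((d + d).val = 2 ∧ (d + d + d).val = 3) ∨
      ((d + d).val = n - 2 ∧ (d + d + d).val = n - 3) := by
    rcases hdval with h1 | h1
    · left
      have h2 : (d + d).val = 2 := by
        rw [Fin.val_add, h1]; exact Nat.mod_eq_of_lt (by omega)
      refine ⟨h2, ?_⟩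
      rw [Fin.val_add, h2, h1]; exact Nat.mod_eq_of_lt (by omega)
    · right
      have h2 : (d + d).val = n - 2 := by
        rw [Fin.val_add, h1]
        have e : n - 1 + (n - 1) = n + (n - 2) := by omega
        rw [e, Nat.add_mod_left]; exact Nat.mod_eq_of_lt (by omega)
      refine ⟨h2, ?_⟩
      rw [Fin.val_add, h2, h1]
      have e : n - 2 + (n - 1) = n + (n - 3) := by omega
      rw [e, Nat.add_mod_left]; exact Nat.mod_eq_of_lt (by omega)
  have v2 : (d + d).val = 2 ∨ (d + d).val = n - 2 := key.imp And.left And.left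
  have v3 : (d + d + d).val = 3 ∨ (d + d + d).val = n - 3 := key.imp And.right And.right
  have hne2 : (d + d) ≠ 0 := by
    intro h0
    rcases v2 with h2 | h2 <;> rw [h0] at h2 <;> simp at h2 <;> omega
  have hne3 : (d + d + d) ≠ 0 := by
    intro h0
    rcases v3 with h3 | h3 <;> rw [h0] at h3 <;> simp at h3 <;> omega
  have vneg : ∀ x : Fin n, x ≠ 0 → (-x).val = n - x.val := by
    intro x hx
    rw [hneg]
    have : x.val ≠ 0 := Fin.val_ne_zero_iff.mpr hx
    exact Nat.mod_eq_of_lt (by omega)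
  refine ⟨?_, ?_, ?_, ?_⟩
  · intro he; exact hne2 (by rw [← hka, he]; ring)
  · intro he; exact hne3 (by rw [← hkb, he]; ring)
  · rw [cycleGraph_adj', hka, hak, vneg _ hne2]
    rcases v2 with h2 | h2 <;> rw [h2] <;> omega
  · rw [cycleGraph_adj', hkb, hbk, vneg _ hne3]
    rcases v3 with h3 | h3 <;> rw [h3] <;> omega

lemma pick {α : Type*} (last a b c d : α) (hab : a ≠ b) (hcd : c ≠ d)
    (h : ¬((a = c ∧ b = d) ∨ (a = d ∧ b = c))) :
    ∃ k, k ≠ last ∧ ((k = a ∨ k = b) ∧ k ≠ c ∧ k ≠ d ∨ (k = c ∨ k = d) ∧ k ≠ a ∧ k ≠ b) := by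
  have key : ∃ w₁ w₂, w₁ ≠ w₂ ∧
      ((w₁ = a ∨ w₁ = b) ∧ w₁ ≠ c ∧ w₁ ≠ d ∨ (w₁ = c ∨ w₁ = d) ∧ w₁ ≠ a ∧ w₁ ≠ b) ∧
      ((w₂ = a ∨ w₂ = b) ∧ w₂ ≠ c ∧ w₂ ≠ d ∨ (w₂ = c ∨ w₂ = d) ∧ w₂ ≠ a ∧ w₂ ≠ b) := by
    by_cases hac : a = c
    · subst hac
      have hbd : b ≠ d := fun h' => h (Or.inl ⟨rfl, h'⟩)
      exact ⟨b, d, hbd, Or.inl ⟨Or.inr rfl, Ne.symm hab, hbd⟩,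
        Or.inr ⟨Or.inr rfl, Ne.symm hcd, Ne.symm hbd⟩⟩
    · by_cases had : a = d
      · subst had
        have hbc : b ≠ c := fun h' => h (Or.inr ⟨rfl, h'⟩)
        exact ⟨b, c, hbc, Or.inl ⟨Or.inr rfl, hbc, Ne.symm hab⟩,
          Or.inr ⟨Or.inl rfl, hcd, Ne.symm hbc⟩⟩
      · by_cases hbc : b = c
        · subst hbc
          exact ⟨a, d, had, Or.inl ⟨Or.inl rfl, hac, had⟩,
            Or.inr ⟨Or.inr rfl, fun h' => had h'.symm, Ne.symm hcd⟩⟩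
        · by_cases hbd : b = d
          · subst hbd
            exact ⟨a, c, hac, Or.inl ⟨Or.inl rfl, hac, had⟩,
              Or.inr ⟨Or.inl rfl, fun h' => hac h'.symm, Ne.symm hbc⟩⟩
          · exact ⟨a, b, hab, Or.inl ⟨Or.inl rfl, hac, had⟩, Or.inl ⟨Or.inr rfl, hbc, hbd⟩⟩
  obtain ⟨w₁, w₂, hw, h1, h2⟩ := key
  by_cases hl : w₁ = last
  · exact ⟨w₂, fun h' => hw (hl.trans h'.symm), h2⟩
  · exact ⟨w₁, hl, h1⟩

end Aux

theorem edim_wheel (n : ℕ) (hn : 5 ≤ n) : edim (wheelGraph n) = n - 1 := by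
  haveI : NeZero n := ⟨by omega⟩
  set last : Fin n := ⟨n - 1, by omega⟩ with hlast
  set S : Finset (Option (Fin n)) :=
    (Finset.univ.filter (fun i : Fin n => i ≠ last)).image some with hS
  have hmemS : ∀ k : Fin n, k ≠ last → (some k : Option (Fin n)) ∈ (S : Set (Option (Fin n))) := by
    intro k hk
    simp [hS, hk]
  have hcard : S.card = n - 1 := by
    rw [hS, Finset.card_image_of_injective _ (Option.some_injective _), Finset.filter_ne',
      Finset.card_erase_of_mem (Finset.mem_univ _)]
    simp
  -- the set S is an edge metric generator
  have classify : ∀ e ∈ (wheelGraph n).edgeSet,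
      (∃ i : Fin n, e = s((none : Option (Fin n)), some i)) ∨
      ∃ a b : Fin n, e = s(some a, some b) ∧ (cycleGraph n).Adj a b := by
    intro e
    induction e using Sym2.ind with
    | _ x y =>
      intro he
      rw [mem_edgeSet] at he
      match x, y with
      | none, none => exact absurd rfl he.ne
      | none, some i => exact Or.inl ⟨i, rfl⟩
      | some i, none => exact Or.inl ⟨i, Sym2.eq_swap⟩
      | some a, some b => exact Or.inr ⟨a, b, rfl, wheel_adj_some.mp he⟩
  have spoke_cyc : ∀ (i a b : Fin n), (cycleGraph n).Adj a b →
      ∃ v ∈ (S : Set (Option (Fin n))),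
        edgeDist (wheelGraph n) v s((none : Option (Fin n)), some i) ≠
          edgeDist (wheelGraph n) v s(some a, some b) := by
    intro i a b hadj
    by_cases hia : i = a
    · subst hia
      by_cases hbl : b = last
      · obtain ⟨k, hka, hkb, hnca, hncb⟩ := fin_helper hn hadj
        refine ⟨some k, hmemS k (hbl ▸ hkb), ?_⟩
        rw [ed_some_spoke hka, ed_cyc_two hka hkb hnca hncb]
        omega
      · refine ⟨some b, hmemS b hbl, ?_⟩
        rw [ed_some_spoke (Ne.symm hadj.ne), ed_cyc_right]
        omega
    · by_cases hib : i = b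
      · subst hib
        by_cases hal : a = last
        · obtain ⟨k, hkb, hka, hncb, hnca⟩ := fin_helper hn hadj.symm
          refine ⟨some k, hmemS k (hal ▸ hka), ?_⟩
          rw [ed_some_spoke hkb, ed_cyc_two hka hkb hnca hncb]
          omega
        · refine ⟨some a, hmemS a hal, ?_⟩
          rw [ed_some_spoke hadj.ne, ed_cyc_left]
          omega
      · by_cases hal : a = last
        · have hbl : b ≠ last := fun h' => hadj.ne (hal.trans h'.symm)
          refine ⟨some b, hmemS b hbl, ?_⟩
          rw [ed_some_spoke (Ne.symm hib), ed_cyc_right]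
          omega
        · refine ⟨some a, hmemS a hal, ?_⟩
          rw [ed_some_spoke (Ne.symm hia), ed_cyc_left]
          omega
  have hgen : IsEdgeMetricGenerator (wheelGraph n) ↑S := by
    intro e₁ he₁ e₂ he₂ hne
    rcases classify e₁ he₁ with ⟨i, rfl⟩ | ⟨a, b, rfl, hab⟩ <;>
      rcases classify e₂ he₂ with ⟨j, rfl⟩ | ⟨c, d, rfl, hcd⟩
    · have hij : i ≠ j := by rintro rfl; exact hne rfl
      by_cases hil : i = last
      · have hjl : j ≠ last := fun h' => hij (hil.trans h'.symm)
        refine ⟨some j, hmemS j hjl, ?_⟩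
        rw [ed_some_spoke (Ne.symm hij), ed_some_spoke_self]
        omega
      · refine ⟨some i, hmemS i hil, ?_⟩
        rw [ed_some_spoke_self, ed_some_spoke hij]
        omega
    · exact spoke_cyc i c d hcd
    · obtain ⟨v, hv, hvne⟩ := spoke_cyc j a b hab
      exact ⟨v, hv, hvne.symm⟩
    · have hne' : ¬((a = c ∧ b = d) ∨ (a = d ∧ b = c)) := by
        intro h'
        apply hne
        rcases h' with ⟨rfl, rfl⟩ | ⟨rfl, rfl⟩
        · rfl
        · exact Sym2.eq_swap
      obtain ⟨k, hkl, hk⟩ := pick last a b c d hab.ne hcd.ne hne'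
      refine ⟨some k, hmemS k hkl, ?_⟩
      rcases hk with ⟨hk1, hkc, hkd⟩ | ⟨hk1, hka, hkb⟩
      · have h0 : edgeDist (wheelGraph n) (some k) s(some a, some b) = 0 := by
          rcases hk1 with rfl | rfl
          · exact ed_cyc_left
          · exact ed_cyc_right
        rw [h0]
        exact (Nat.ne_of_lt (ed_cyc_pos hkc hkd))
      · have h0 : edgeDist (wheelGraph n) (some k) s(some c, some d) = 0 := by
          rcases hk1 with rfl | rfl
          · exact ed_cyc_left
          · exact ed_cyc_right
        rw [h0]
        exact (ed_cyc_pos hka hkb).ne'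
  have hmemT : (n - 1) ∈ {k | ∃ S : Finset (Option (Fin n)),
      S.card = k ∧ IsEdgeMetricGenerator (wheelGraph n) ↑S} := ⟨S, hcard, hgen⟩
  refine le_antisymm (Nat.sInf_le hmemT) (le_csInf ⟨_, hmemT⟩ ?_)
  rintro m ⟨S', hSc, hSg⟩
  by_contra hlt
  push_neg at hlt
  have hA : (Finset.univ.filter fun i : Fin n => some i ∈ S').card ≤ m := by
    rw [← hSc]
    refine Finset.card_le_card_of_injOn some ?_ ?_
    · intro i hi; exact (Finset.mem_filter.mp hi).2
    · intro x _ y _ hxy; exact Option.some_injective _ hxy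
  have htot : (Finset.univ.filter fun i : Fin n => some i ∈ S').card
      + (Finset.univ.filter fun i : Fin n => ¬ some i ∈ S').card = n := by
    rw [Finset.card_filter_add_card_filter_not]
    simp
  have hB : 1 < (Finset.univ.filter fun i : Fin n => ¬ some i ∈ S').card := by omega
  obtain ⟨i, hi, j, hj, hij⟩ := Finset.one_lt_card.mp hB
  have hiS : some i ∉ S' := (Finset.mem_filter.mp hi).2
  have hjS : some j ∉ S' := (Finset.mem_filter.mp hj).2
  have hne12 : s((none : Option (Fin n)), some i) ≠ s((none : Option (Fin n)), some j) := by
    intro h'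
    rw [Sym2.eq_iff] at h'
    rcases h' with ⟨-, h'⟩ | ⟨h', -⟩
    · exact hij (Option.some_injective _ h')
    · exact absurd h' (by simp)
  obtain ⟨v, hv, hvne⟩ := hSg s((none : Option (Fin n)), some i)
    ((mem_edgeSet _).mpr (wheel_adj_hub i)) s((none : Option (Fin n)), some j)
    ((mem_edgeSet _).mpr (wheel_adj_hub j)) hne12
  obtain _ | k := v
  · exact hvne (by rw [ed_none_spoke, ed_none_spoke])
  · have hv' : some k ∈ S' := hv
    have hki : k ≠ i := fun h' => hiS (h' ▸ hv')
    have hkj : k ≠ j := fun h' => hjS (h' ▸ hv')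
    exact hvne (by rw [ed_some_spoke hki, ed_some_spoke hkj])
end

section
/- For any positive integers r, t, the edge metric dimension of the torus C_{4r} □ C_{4t} is at least 3; that is, no set of two vertices is an edge metric generator. -/
open SimpleGraph

open Fin.NatCast

/-! ### Auxiliary arithmetic lemmas -/

lemma EdimAux.two_mod_cases (a N : ℕ) (h : a < 2*N) (h0 : a % N = 0) : a = 0 ∨ a = N := by
  rcases Nat.lt_or_ge a N with h'|h'
  · left; rwa [Nat.mod_eq_of_lt h'] at h0
  · rw [Nat.mod_eq_sub_mod h', Nat.mod_eq_of_lt (by omega)] at h0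
    omega

lemma EdimAux.fin_add_val {N : ℕ} (a b : Fin N) : (a + b).val = (a.val + b.val) % N := by
  rw [Fin.add_def]

lemma EdimAux.fin_neg_add {N : ℕ} [NeZero N] (a b : Fin N) (h : a + b = 0) :
    a.val + b.val = 0 ∨ a.val + b.val = N := by
  have h2 := EdimAux.fin_add_val a b
  rw [h] at h2
  have h3 : (0 : Fin N).val = 0 := rfl
  have hlt : a.val + b.val < 2 * N := by
    have := a.isLt; have := b.isLt; omega
  exact EdimAux.two_mod_cases _ _ hlt (by omega)

lemma EdimAux.fin_cast_val {N k : ℕ} [NeZero N] (h : k < N) : ((k : Fin N)).val = k := by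
  rw [Fin.val_natCast, Nat.mod_eq_of_lt h]

lemma EdimAux.neg_cast_val {N k l : ℕ} [NeZero N] (hk : 0 < k) (hkl : k + l = N) :
    (-(k : Fin N)).val = l := by
  have h1 : (k : Fin N) + (l : Fin N) = 0 := by
    rw [← Nat.cast_add, hkl, Fin.natCast_self]
  have h2 : -(k : Fin N) = (l : Fin N) := neg_eq_of_add_eq_zero_right h1
  rw [h2, EdimAux.fin_cast_val (by omega)]

lemma EdimAux.min_neg_val {N : ℕ} [NeZero N] (x : Fin N) :
    min x.val (-x).val = min x.val (N - x.val) := by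
  have h := EdimAux.fin_neg_add x (-x) (by simp)
  have h1 := x.isLt
  have h2 := (-x).isLt
  omega

lemma EdimAux.fin_one_val {N : ℕ} [NeZero N] (hN : 2 ≤ N) : (1 : Fin N).val = 1 := by
  rw [← Nat.cast_one, EdimAux.fin_cast_val (by omega)]

lemma EdimAux.fin_succ_val {N : ℕ} [NeZero N] (hN : 2 ≤ N) (x : Fin N) :
    (x + 1).val = x.val + 1 ∨ (x.val + 1 = N ∧ (x + 1).val = 0) := by
  have h := EdimAux.fin_add_val x 1
  rw [EdimAux.fin_one_val hN] at h
  have h1 := x.isLt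
  rcases Nat.lt_or_ge (x.val + 1) N with hc|hc
  · left; rw [h, Nat.mod_eq_of_lt hc]
  · right
    have hxn : x.val + 1 = N := by omega
    exact ⟨hxn, by rw [h, hxn, Nat.mod_self]⟩

lemma EdimAux.fin_shift_ne {N : ℕ} [NeZero N] (hN : 3 ≤ N) (x : Fin N) :
    x + 1 ≠ x - 1 ∧ x + 1 ≠ x ∧ x - 1 ≠ x := by
  have h1 : (1 : Fin N).val = 1 := EdimAux.fin_one_val (by omega)
  have h0 : (0 : Fin N).val = 0 := rfl
  refine ⟨?_, ?_, ?_⟩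
  · intro h
    have h2 : x + 1 + 1 = x := by rw [h, sub_add_cancel]
    rw [add_assoc] at h2
    have h3 : (1 : Fin N) + 1 = 0 := add_eq_left.mp h2
    have h4 := congrArg Fin.val h3
    rw [EdimAux.fin_add_val, h1, h0, Nat.mod_eq_of_lt (by omega)] at h4
    omega
  · intro h
    have h3 := add_eq_left.mp h
    have h4 := congrArg Fin.val h3
    rw [h1, h0] at h4
    omega
  · intro h
    have h2 : x - 1 + 1 = x + 1 := by rw [h]
    rw [sub_add_cancel] at h2
    have h3 := add_eq_left.mp h2.symm
    have h4 := congrArg Fin.val h3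
    rw [h1, h0] at h4
    omega

lemma EdimAux.fin_pred_val {N : ℕ} [NeZero N] (hN : 2 ≤ N) (x : Fin N) :
    x.val = (x - 1).val + 1 ∨ ((x - 1).val + 1 = N ∧ x.val = 0) := by
  have h := EdimAux.fin_succ_val hN (x - 1)
  rw [sub_add_cancel] at h
  tauto

/-! ### Distances in cycles -/

lemma EdimAux.cycle_walk_le {n : ℕ} (u : Fin (n+2)) (k : ℕ) :
    (cycleGraph (n+2)).dist u (u + (k : Fin (n+2))) ≤ k := by
  induction k with
  | zero => simp
  | succ k ih =>
    have hconn : (cycleGraph (n+2)).Connected := cycleGraph_connected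
    have hadj : (cycleGraph (n+2)).Adj (u + (k : Fin (n+2))) (u + ((k+1 : ℕ) : Fin (n+2))) := by
      rw [cycleGraph_adj]
      right
      push_cast
      abel
    calc (cycleGraph (n+2)).dist u (u + ((k+1:ℕ) : Fin (n+2)))
        ≤ _ + _ := hconn.dist_triangle (v := u + (k : Fin (n+2)))
      _ ≤ k + 1 := by
          have := dist_le hadj.toWalk
          simp only [Walk.length_cons, Walk.length_nil] at this
          omega

lemma EdimAux.cycle_dist_le {n : ℕ} (u v : Fin (n+2)) :
    (cycleGraph (n+2)).dist u v ≤ (v - u).val := by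
  have := EdimAux.cycle_walk_le u (v - u).val
  rwa [Fin.cast_val_eq_self, add_sub_cancel] at this

lemma EdimAux.cycle_walk_ge {n : ℕ} (u v : Fin (n+2)) (w : (cycleGraph (n+2)).Walk u v) :
    min (v - u).val (u - v).val ≤ w.length := by
  induction w with
  | nil => simp
  | @cons u x v h p ih =>
    rw [cycleGraph_adj'] at h
    have hA : v - u = (v - x) + (x - u) := (sub_add_sub_cancel v x u).symm
    have hB : u - v = (u - x) + (x - v) := (sub_add_sub_cancel u x v).symm
    have hA' := EdimAux.fin_add_val (v - x) (x - u)
    have hB' := EdimAux.fin_add_val (u - x) (x - v)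
    rw [← hA] at hA'
    rw [← hB] at hB'
    have hCD := EdimAux.fin_neg_add (v - x) (x - v) (by rw [sub_add_sub_cancel', sub_self])
    have hux := EdimAux.fin_neg_add (u - x) (x - u) (by rw [sub_add_sub_cancel', sub_self])
    have hC : (v - x).val < n + 2 := (v - x).isLt
    have hD : (x - v).val < n + 2 := (x - v).isLt
    have hA2 : (v - u).val < n + 2 := (v - u).isLt
    have hB2 : (u - v).val < n + 2 := (u - v).isLt
    have h1 : (v-u).val = (v-x).val + (x-u).val ∨
        (v-u).val + (n+2) = (v-x).val + (x-u).val := by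
      rcases Nat.lt_or_ge ((v-x).val + (x-u).val) (n+2) with hc|hc
      · left; rw [hA', Nat.mod_eq_of_lt hc]
      · right
        rw [hA', Nat.mod_eq_sub_mod hc, Nat.mod_eq_of_lt (by omega)]
        omega
    have h2 : (u-v).val = (u-x).val + (x-v).val ∨
        (u-v).val + (n+2) = (u-x).val + (x-v).val := by
      rcases Nat.lt_or_ge ((u-x).val + (x-v).val) (n+2) with hc|hc
      · left; rw [hB', Nat.mod_eq_of_lt hc]
      · right
        rw [hB', Nat.mod_eq_sub_mod hc, Nat.mod_eq_of_lt (by omega)]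
        omega
    simp only [Walk.length_cons]
    have hx1 : (u - x).val < n + 2 := (u - x).isLt
    have hx2 : (x - u).val < n + 2 := (x - u).isLt
    rcases h with h|h <;> omega

lemma EdimAux.cycle_dist {n : ℕ} (hn : 2 ≤ n) (u v : Fin n) :
    (cycleGraph n).dist u v = min (v - u).val (u - v).val := by
  obtain ⟨m, rfl⟩ : ∃ m, n = m + 2 := ⟨n - 2, by omega⟩
  refine le_antisymm (le_min (EdimAux.cycle_dist_le u v) ?_) ?_
  · rw [dist_comm]; exact EdimAux.cycle_dist_le v u
  · obtain ⟨w, hw⟩ := (cycleGraph_connected (n := m+1)).exists_walk_length_eq_dist u v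
    rw [← hw]
    exact EdimAux.cycle_walk_ge u v w

lemma EdimAux.cycle_connected {n : ℕ} (hn : 1 ≤ n) : (cycleGraph n).Connected := by
  obtain ⟨m, rfl⟩ : ∃ m, n = m + 1 := ⟨n - 1, by omega⟩
  exact cycleGraph_connected

/-! ### Distances in box products -/

lemma EdimAux.boxProd_walk_ge {α β : Type*} {G : SimpleGraph α} {H : SimpleGraph β}
    (hG : G.Connected) (hH : H.Connected) {x y : α × β}
    (w : (G □ H).Walk x y) : G.dist x.1 y.1 + H.dist x.2 y.2 ≤ w.length := by
  induction w with
  | nil => simp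
  | @cons x z y h p ih =>
    simp only [Walk.length_cons]
    rcases h with ⟨h1, h2⟩ | ⟨h1, h2⟩
    · have t1 : G.dist x.1 y.1 ≤ G.dist x.1 z.1 + G.dist z.1 y.1 := hG.dist_triangle
      have t2 : G.dist x.1 z.1 ≤ 1 := by
        have := dist_le h1.toWalk
        simpa using this
      have t3 : H.dist x.2 y.2 = H.dist z.2 y.2 := by rw [h2]
      omega
    · have t1 : H.dist x.2 y.2 ≤ H.dist x.2 z.2 + H.dist z.2 y.2 := hH.dist_triangle
      have t2 : H.dist x.2 z.2 ≤ 1 := by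
        have := dist_le h1.toWalk
        simpa using this
      have t3 : G.dist x.1 y.1 = G.dist z.1 y.1 := by rw [h2]
      omega

lemma EdimAux.boxProd_dist {α β : Type*} {G : SimpleGraph α} {H : SimpleGraph β}
    (hG : G.Connected) (hH : H.Connected) (x y : α × β) :
    (G □ H).dist x y = G.dist x.1 y.1 + H.dist x.2 y.2 := by
  refine le_antisymm ?_ ?_
  · obtain ⟨w1, hw1⟩ := hG.exists_walk_length_eq_dist x.1 y.1
    obtain ⟨w2, hw2⟩ := hH.exists_walk_length_eq_dist x.2 y.2
    have := dist_le ((w1.boxProdLeft H x.2).append (Walk.boxProdRight G y.1 w2))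
    have hl : ((w1.boxProdLeft H x.2).append (Walk.boxProdRight G y.1 w2)).length
        = w1.length + w2.length := by
      rw [Walk.length_append]; exact congrArg₂ (· + ·) (Walk.length_map _ _) (Walk.length_map _ _)
    rw [hl, hw1, hw2] at this
    simpa using this
  · obtain ⟨w, hw⟩ := (hG.boxProd hH).exists_walk_length_eq_dist x y
    rw [← hw]
    exact EdimAux.boxProd_walk_ge hG hH w

/-! ### The key arithmetic fact -/

set_option maxHeartbeats 1000000 in
lemma EdimAux.nat_key (r t zv zp zm wv wp wm : ℕ)
    (hr : 1 ≤ r) (ht : 1 ≤ t)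
    (hz : zv < 4*r) (hzm' : zm < 4*r) (hw : wv < 4*t) (hwm' : wm < 4*t)
    (s1 : zp = zv + 1 ∨ (zv + 1 = 4*r ∧ zp = 0))
    (s2 : zv = zm + 1 ∨ (zm + 1 = 4*r ∧ zv = 0))
    (s3 : wp = wv + 1 ∨ (wv + 1 = 4*t ∧ wp = 0))
    (s4 : wv = wm + 1 ∨ (wm + 1 = 4*t ∧ wv = 0)) :
    min (min zv (4*r-zv) + min wv (4*t-wv)) (min zv (4*r-zv) + min wp (4*t-wp))
      = min (min zv (4*r-zv) + min wm (4*t-wm)) (min zv (4*r-zv) + min wv (4*t-wv)) ∨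
    min (min zv (4*r-zv) + min wv (4*t-wv)) (min zv (4*r-zv) + min wp (4*t-wp))
      = min (min zv (4*r-zv) + min wv (4*t-wv)) (min zp (4*r-zp) + min wv (4*t-wv)) ∨
    min (min zv (4*r-zv) + min wv (4*t-wv)) (min zv (4*r-zv) + min wp (4*t-wp))
      = min (min zm (4*r-zm) + min wv (4*t-wv)) (min zv (4*r-zv) + min wv (4*t-wv)) ∨
    min (min zv (4*r-zv) + min wm (4*t-wm)) (min zv (4*r-zv) + min wv (4*t-wv))
      = min (min zv (4*r-zv) + min wv (4*t-wv)) (min zp (4*r-zp) + min wv (4*t-wv)) ∨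
    min (min zv (4*r-zv) + min wm (4*t-wm)) (min zv (4*r-zv) + min wv (4*t-wv))
      = min (min zm (4*r-zm) + min wv (4*t-wv)) (min zv (4*r-zv) + min wv (4*t-wv)) ∨
    min (min zv (4*r-zv) + min wv (4*t-wv)) (min zp (4*r-zp) + min wv (4*t-wv))
      = min (min zm (4*r-zm) + min wv (4*t-wv)) (min zv (4*r-zv) + min wv (4*t-wv)) := by
  rcases s1 with s1|⟨s1,s1'⟩ <;> rcases s2 with s2|⟨s2,s2'⟩ <;>
    rcases s3 with s3|⟨s3,s3'⟩ <;> rcases s4 with s4|⟨s4,s4'⟩ <;> omega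

lemma EdimAux.min_helper1 (u v : ℕ) (hv : 1 ≤ v) : min (u + v) (u + (v - 1)) = u + v - 1 := by
  omega

lemma EdimAux.min_helper2 (u v : ℕ) (hu : 1 ≤ u) : min (u + v) ((u - 1) + v) = u + v - 1 := by
  omega

/-! ### The key construction: four edges around the antipode of `a` -/

lemma EdimAux.torus_key (r t : ℕ) (hr : 1 ≤ r) (ht : 1 ≤ t)
    (a b : Fin (4*r) × Fin (4*t)) :
    ∃ e1 e2 : Sym2 (Fin (4*r) × Fin (4*t)),
      e1 ∈ (cycleGraph (4*r) □ cycleGraph (4*t)).edgeSet ∧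
      e2 ∈ (cycleGraph (4*r) □ cycleGraph (4*t)).edgeSet ∧
      e1 ≠ e2 ∧
      edgeDist (cycleGraph (4*r) □ cycleGraph (4*t)) a e1
        = edgeDist (cycleGraph (4*r) □ cycleGraph (4*t)) a e2 ∧
      edgeDist (cycleGraph (4*r) □ cycleGraph (4*t)) b e1
        = edgeDist (cycleGraph (4*r) □ cycleGraph (4*t)) b e2 := by
  haveI : NeZero (4*r) := ⟨by omega⟩
  haveI : NeZero (4*t) := ⟨by omega⟩
  have hm : 2 ≤ 4*r := by omega
  have hn : 2 ≤ 4*t := by omega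
  set G := cycleGraph (4*r) □ cycleGraph (4*t) with hGdef
  have hc1 : (cycleGraph (4*r)).Connected := EdimAux.cycle_connected (by omega)
  have hc2 : (cycleGraph (4*t)).Connected := EdimAux.cycle_connected (by omega)
  have hGd : ∀ u v : Fin (4*r) × Fin (4*t),
      G.dist u v = min (v.1 - u.1).val (u.1 - v.1).val + min (v.2 - u.2).val (u.2 - v.2).val := by
    intro u v
    rw [hGdef, EdimAux.boxProd_dist hc1 hc2, EdimAux.cycle_dist hm, EdimAux.cycle_dist hn]
  have hed : ∀ (v p q : Fin (4*r) × Fin (4*t)),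
      edgeDist G v s(p, q) = min (G.dist v p) (G.dist v q) := by
    intro v p q
    simp [edgeDist]
  set A1 : Fin (4*r) := a.1 + ((2*r : ℕ) : Fin (4*r)) with hA1
  set A2 : Fin (4*t) := a.2 + ((2*t : ℕ) : Fin (4*t)) with hA2
  -- cast facts
  have hcastp : ((2*r : ℕ) : Fin (4*r)) + 1 = ((2*r + 1 : ℕ) : Fin (4*r)) := by
    rw [← Nat.cast_one, ← Nat.cast_add]
  have hcastm : ((2*r : ℕ) : Fin (4*r)) - 1 = ((2*r - 1 : ℕ) : Fin (4*r)) := by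
    rw [sub_eq_iff_eq_add, show (1 : Fin (4*r)) = ((1:ℕ) : Fin (4*r)) from (Nat.cast_one).symm,
      ← Nat.cast_add]
    congr 1
    omega
  have hcastpt : ((2*t : ℕ) : Fin (4*t)) + 1 = ((2*t + 1 : ℕ) : Fin (4*t)) := by
    rw [← Nat.cast_one, ← Nat.cast_add]
  have hcastmt : ((2*t : ℕ) : Fin (4*t)) - 1 = ((2*t - 1 : ℕ) : Fin (4*t)) := by
    rw [sub_eq_iff_eq_add, show (1 : Fin (4*t)) = ((1:ℕ) : Fin (4*t)) from (Nat.cast_one).symm,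
      ← Nat.cast_add]
    congr 1
    omega
  -- Fin-level differences from a
  have g1 : A1 - a.1 = ((2*r : ℕ) : Fin (4*r)) := by rw [hA1, add_sub_cancel_left]
  have g3 : (A1 + 1) - a.1 = ((2*r + 1 : ℕ) : Fin (4*r)) := by
    rw [hA1, add_assoc, add_sub_cancel_left, hcastp]
  have g5 : (A1 - 1) - a.1 = ((2*r - 1 : ℕ) : Fin (4*r)) := by
    rw [hA1, sub_right_comm, add_sub_cancel_left, hcastm]
  have g2 : A2 - a.2 = ((2*t : ℕ) : Fin (4*t)) := by rw [hA2, add_sub_cancel_left]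
  have g4 : (A2 + 1) - a.2 = ((2*t + 1 : ℕ) : Fin (4*t)) := by
    rw [hA2, add_assoc, add_sub_cancel_left, hcastpt]
  have g6 : (A2 - 1) - a.2 = ((2*t - 1 : ℕ) : Fin (4*t)) := by
    rw [hA2, sub_right_comm, add_sub_cancel_left, hcastmt]
  -- distances from a
  have hd0 : G.dist a (A1, A2) = 2*r + 2*t := by
    rw [hGd]
    dsimp only
    rw [g1, ← neg_sub A1 a.1, g1, g2, ← neg_sub A2 a.2, g2,
      EdimAux.fin_cast_val (by omega : 2*r < 4*r),
      EdimAux.fin_cast_val (by omega : 2*t < 4*t),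
      EdimAux.neg_cast_val (by omega) (by omega : 2*r + 2*r = 4*r),
      EdimAux.neg_cast_val (by omega) (by omega : 2*t + 2*t = 4*t)]
    omega
  have hdU : G.dist a (A1, A2 + 1) = 2*r + (2*t - 1) := by
    rw [hGd]
    dsimp only
    rw [g1, ← neg_sub A1 a.1, g1, g4, ← neg_sub (A2+1) a.2, g4,
      EdimAux.fin_cast_val (by omega : 2*r < 4*r),
      EdimAux.fin_cast_val (by omega : 2*t + 1 < 4*t),
      EdimAux.neg_cast_val (by omega) (by omega : 2*r + 2*r = 4*r),
      EdimAux.neg_cast_val (by omega) (by omega : 2*t + 1 + (2*t - 1) = 4*t)]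
    omega
  have hdD : G.dist a (A1, A2 - 1) = 2*r + (2*t - 1) := by
    rw [hGd]
    dsimp only
    rw [g1, ← neg_sub A1 a.1, g1, g6, ← neg_sub (A2-1) a.2, g6,
      EdimAux.fin_cast_val (by omega : 2*r < 4*r),
      EdimAux.fin_cast_val (by omega : 2*t - 1 < 4*t),
      EdimAux.neg_cast_val (by omega) (by omega : 2*r + 2*r = 4*r),
      EdimAux.neg_cast_val (by omega) (by omega : 2*t - 1 + (2*t + 1) = 4*t)]
    omega
  have hdR : G.dist a (A1 + 1, A2) = (2*r - 1) + 2*t := by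
    rw [hGd]
    dsimp only
    rw [g3, ← neg_sub (A1+1) a.1, g3, g2, ← neg_sub A2 a.2, g2,
      EdimAux.fin_cast_val (by omega : 2*r + 1 < 4*r),
      EdimAux.fin_cast_val (by omega : 2*t < 4*t),
      EdimAux.neg_cast_val (by omega) (by omega : 2*r + 1 + (2*r - 1) = 4*r),
      EdimAux.neg_cast_val (by omega) (by omega : 2*t + 2*t = 4*t)]
    omega
  have hdL : G.dist a (A1 - 1, A2) = (2*r - 1) + 2*t := by
    rw [hGd]
    dsimp only
    rw [g5, ← neg_sub (A1-1) a.1, g5, g2, ← neg_sub A2 a.2, g2,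
      EdimAux.fin_cast_val (by omega : 2*r - 1 < 4*r),
      EdimAux.fin_cast_val (by omega : 2*t < 4*t),
      EdimAux.neg_cast_val (by omega) (by omega : 2*r - 1 + (2*r + 1) = 4*r),
      EdimAux.neg_cast_val (by omega) (by omega : 2*t + 2*t = 4*t)]
    omega
  -- differences from b
  set z : Fin (4*r) := A1 - b.1 with hz
  set w : Fin (4*t) := A2 - b.2 with hw
  have gb3 : (A1 + 1) - b.1 = z + 1 := by rw [hz, add_sub_right_comm]
  have gb5 : (A1 - 1) - b.1 = z - 1 := by rw [hz, sub_right_comm]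
  have gb4 : (A2 + 1) - b.2 = w + 1 := by rw [hw, add_sub_right_comm]
  have gb6 : (A2 - 1) - b.2 = w - 1 := by rw [hw, sub_right_comm]
  -- distances from b
  have hb0 : G.dist b (A1, A2)
      = min z.val (4*r - z.val) + min w.val (4*t - w.val) := by
    rw [hGd]
    dsimp only
    rw [← hz, ← hw, ← neg_sub A1 b.1, ← hz, ← neg_sub A2 b.2, ← hw,
      EdimAux.min_neg_val z, EdimAux.min_neg_val w]
  have hbU : G.dist b (A1, A2 + 1)
      = min z.val (4*r - z.val) + min (w+1).val (4*t - (w+1).val) := by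
    rw [hGd]
    dsimp only
    rw [← hz, ← neg_sub A1 b.1, ← hz, gb4, ← neg_sub (A2+1) b.2, gb4,
      EdimAux.min_neg_val z, EdimAux.min_neg_val (w+1)]
  have hbD : G.dist b (A1, A2 - 1)
      = min z.val (4*r - z.val) + min (w-1).val (4*t - (w-1).val) := by
    rw [hGd]
    dsimp only
    rw [← hz, ← neg_sub A1 b.1, ← hz, gb6, ← neg_sub (A2-1) b.2, gb6,
      EdimAux.min_neg_val z, EdimAux.min_neg_val (w-1)]
  have hbR : G.dist b (A1 + 1, A2)
      = min (z+1).val (4*r - (z+1).val) + min w.val (4*t - w.val) := by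
    rw [hGd]
    dsimp only
    rw [← hw, ← neg_sub A2 b.2, ← hw, gb3, ← neg_sub (A1+1) b.1, gb3,
      EdimAux.min_neg_val (z+1), EdimAux.min_neg_val w]
  have hbL : G.dist b (A1 - 1, A2)
      = min (z-1).val (4*r - (z-1).val) + min w.val (4*t - w.val) := by
    rw [hGd]
    dsimp only
    rw [← hw, ← neg_sub A2 b.2, ← hw, gb5, ← neg_sub (A1-1) b.1, gb5,
      EdimAux.min_neg_val (z-1), EdimAux.min_neg_val w]
  -- the four edges
  set P0 : Fin (4*r) × Fin (4*t) := (A1, A2) with hP0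
  set PU : Fin (4*r) × Fin (4*t) := (A1, A2 + 1) with hPU
  set PD : Fin (4*r) × Fin (4*t) := (A1, A2 - 1) with hPD
  set PR : Fin (4*r) × Fin (4*t) := (A1 + 1, A2) with hPR
  set PL : Fin (4*r) × Fin (4*t) := (A1 - 1, A2) with hPL
  -- adjacency / membership
  have memU : s(P0, PU) ∈ G.edgeSet := by
    rw [mem_edgeSet, hP0, hPU, hGdef]
    exact boxProd_adj_right.mpr (cycleGraph_adj'.mpr (Or.inr
      (by rw [add_sub_cancel_left]; exact EdimAux.fin_one_val hn)))
  have memD : s(P0, PD) ∈ G.edgeSet := by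
    rw [mem_edgeSet, hP0, hPD, hGdef]
    exact boxProd_adj_right.mpr (cycleGraph_adj'.mpr (Or.inl
      (by rw [sub_sub_cancel]; exact EdimAux.fin_one_val hn)))
  have memR : s(P0, PR) ∈ G.edgeSet := by
    rw [mem_edgeSet, hP0, hPR, hGdef]
    exact boxProd_adj_left.mpr (cycleGraph_adj'.mpr (Or.inr
      (by rw [add_sub_cancel_left]; exact EdimAux.fin_one_val hm)))
  have memL : s(P0, PL) ∈ G.edgeSet := by
    rw [mem_edgeSet, hP0, hPL, hGdef]
    exact boxProd_adj_left.mpr (cycleGraph_adj'.mpr (Or.inl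
      (by rw [sub_sub_cancel]; exact EdimAux.fin_one_val hm)))
  -- pairwise distinctness of the outer endpoints
  obtain ⟨m1, m2, m3⟩ := EdimAux.fin_shift_ne (by omega : 3 ≤ 4*r) A1
  obtain ⟨n1, n2, n3⟩ := EdimAux.fin_shift_ne (by omega : 3 ≤ 4*t) A2
  have pUD : PU ≠ PD := fun h => n1 (congrArg Prod.snd h)
  have pUR : PU ≠ PR := fun h => m2.symm (congrArg Prod.fst h)
  have pUL : PU ≠ PL := fun h => m3.symm (congrArg Prod.fst h)
  have pDR : PD ≠ PR := fun h => m2.symm (congrArg Prod.fst h)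
  have pDL : PD ≠ PL := fun h => m3.symm (congrArg Prod.fst h)
  have pRL : PR ≠ PL := fun h => m1 (congrArg Prod.fst h)
  have eUD : s(P0, PU) ≠ s(P0, PD) := fun h => pUD (Sym2.congr_right.mp h)
  have eUR : s(P0, PU) ≠ s(P0, PR) := fun h => pUR (Sym2.congr_right.mp h)
  have eUL : s(P0, PU) ≠ s(P0, PL) := fun h => pUL (Sym2.congr_right.mp h)
  have eDR : s(P0, PD) ≠ s(P0, PR) := fun h => pDR (Sym2.congr_right.mp h)
  have eDL : s(P0, PD) ≠ s(P0, PL) := fun h => pDL (Sym2.congr_right.mp h)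
  have eRL : s(P0, PR) ≠ s(P0, PL) := fun h => pRL (Sym2.congr_right.mp h)
  -- edge distances from a
  have haU : edgeDist G a s(P0, PU) = 2*r + 2*t - 1 := by
    rw [hed, hd0, hdU]
    exact EdimAux.min_helper1 (2*r) (2*t) (by omega)
  have haD : edgeDist G a s(P0, PD) = 2*r + 2*t - 1 := by
    rw [hed, hd0, hdD]
    exact EdimAux.min_helper1 (2*r) (2*t) (by omega)
  have haR : edgeDist G a s(P0, PR) = 2*r + 2*t - 1 := by
    rw [hed, hd0, hdR]
    exact EdimAux.min_helper2 (2*r) (2*t) (by omega)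
  have haL : edgeDist G a s(P0, PL) = 2*r + 2*t - 1 := by
    rw [hed, hd0, hdL]
    exact EdimAux.min_helper2 (2*r) (2*t) (by omega)
  -- edge distances from b
  have hbU' : edgeDist G b s(P0, PU)
      = min (min z.val (4*r - z.val) + min w.val (4*t - w.val))
            (min z.val (4*r - z.val) + min (w+1).val (4*t - (w+1).val)) := by
    rw [hed, hb0, hbU]
  have hbD' : edgeDist G b s(P0, PD)
      = min (min z.val (4*r - z.val) + min (w-1).val (4*t - (w-1).val))
            (min z.val (4*r - z.val) + min w.val (4*t - w.val)) := by
    rw [hed, hb0, hbD, min_comm]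
  have hbR' : edgeDist G b s(P0, PR)
      = min (min z.val (4*r - z.val) + min w.val (4*t - w.val))
            (min (z+1).val (4*r - (z+1).val) + min w.val (4*t - w.val)) := by
    rw [hed, hb0, hbR]
  have hbL' : edgeDist G b s(P0, PL)
      = min (min (z-1).val (4*r - (z-1).val) + min w.val (4*t - w.val))
            (min z.val (4*r - z.val) + min w.val (4*t - w.val)) := by
    rw [hed, hb0, hbL, min_comm]
  have hkey := EdimAux.nat_key r t z.val (z+1).val (z-1).val w.val (w+1).val (w-1).val
    hr ht z.isLt (z-1).isLt w.isLt (w-1).isLt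
    (EdimAux.fin_succ_val hm z) (EdimAux.fin_pred_val hm z)
    (EdimAux.fin_succ_val hn w) (EdimAux.fin_pred_val hn w)
  rcases hkey with h|h|h|h|h|h
  · exact ⟨s(P0, PU), s(P0, PD), memU, memD, eUD, by rw [haU, haD],
      by rw [hbU', hbD']; exact h⟩
  · exact ⟨s(P0, PU), s(P0, PR), memU, memR, eUR, by rw [haU, haR],
      by rw [hbU', hbR']; exact h⟩
  · exact ⟨s(P0, PU), s(P0, PL), memU, memL, eUL, by rw [haU, haL],
      by rw [hbU', hbL']; exact h⟩
  · exact ⟨s(P0, PD), s(P0, PR), memD, memR, eDR, by rw [haD, haR],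
      by rw [hbD', hbR']; exact h⟩
  · exact ⟨s(P0, PD), s(P0, PL), memD, memL, eDL, by rw [haD, haL],
      by rw [hbD', hbL']; exact h⟩
  · exact ⟨s(P0, PR), s(P0, PL), memR, memL, eRL, by rw [haR, haL],
      by rw [hbR', hbL']; exact h⟩

/-! ### Generators are monotone; the whole vertex set is a generator -/

lemma EdimAux.gen_mono {V : Type*} {G : SimpleGraph V} {S T : Set V}
    (hST : S ⊆ T) (h : IsEdgeMetricGenerator G S) : IsEdgeMetricGenerator G T := by
  intro e1 h1 e2 h2 hne
  obtain ⟨v, hv, hd⟩ := h e1 h1 e2 h2 hne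
  exact ⟨v, hST hv, hd⟩

lemma EdimAux.univ_gen {V : Type*} [Fintype V] {G : SimpleGraph V} (hG : G.Connected) :
    IsEdgeMetricGenerator G (↑(Finset.univ : Finset V)) := by
  intro e1 h1 e2 h2 hne
  induction e1 with
  | _ x y =>
  induction e2 with
  | _ p q =>
  rw [mem_edgeSet] at h1 h2
  have hxy : x ≠ y := h1.ne
  have key : ∀ v : V, (v = x ∨ v = y) → v ≠ p → v ≠ q →
      ∃ u ∈ (↑(Finset.univ : Finset V) : Set V),
        edgeDist G u s(x, y) ≠ edgeDist G u s(p, q) := by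
    intro v hv hvp hvq
    refine ⟨v, by simp, ?_⟩
    have h1' : edgeDist G v s(x, y) = 0 := by
      rcases hv with rfl|rfl
      · simp [edgeDist]
      · simp [edgeDist]
    have h2' : edgeDist G v s(p, q) ≠ 0 := by
      simp only [edgeDist, Sym2.lift_mk]
      have hp := hG.pos_dist_of_ne hvp
      have hq := hG.pos_dist_of_ne hvq
      omega
    omega
  by_cases hxp : x = p
  · have hyp : y ≠ p := by rintro rfl; exact hxy hxp
    have hyq : y ≠ q := by
      rintro rfl
      subst hxp
      exact hne rfl
    exact key y (Or.inr rfl) hyp hyq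
  · by_cases hxq : x = q
    · have hyq : y ≠ q := by rintro rfl; exact hxy hxq
      have hyp : y ≠ p := by
        rintro rfl
        subst hxq
        exact hne (Sym2.eq_swap)
      exact key y (Or.inr rfl) hyp hyq
    · exact key x (Or.inl rfl) hxp hxq

theorem edim_torus_lower (r t : ℕ) (hr : 1 ≤ r) (ht : 1 ≤ t) :
    (∀ S : Finset (Fin (4 * r) × Fin (4 * t)), S.card = 2 →
      ¬ IsEdgeMetricGenerator (cycleGraph (4 * r) □ cycleGraph (4 * t)) ↑S) ∧
    3 ≤ edim (cycleGraph (4 * r) □ cycleGraph (4 * t)) := by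
  have hpart1 : ∀ S : Finset (Fin (4 * r) × Fin (4 * t)), S.card ≤ 2 →
      ¬ IsEdgeMetricGenerator (cycleGraph (4 * r) □ cycleGraph (4 * t)) ↑S := by
    intro S hcard hgen
    have hex : ∃ a b : Fin (4 * r) × Fin (4 * t), ↑S ⊆ ({a, b} : Set _) := by
      rcases S.eq_empty_or_nonempty with rfl|⟨a, ha⟩
      · exact ⟨(⟨0, by omega⟩, ⟨0, by omega⟩), (⟨0, by omega⟩, ⟨0, by omega⟩), by simp⟩
      · rcases (S.erase a).eq_empty_or_nonempty with he|⟨c, hc⟩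
        · refine ⟨a, a, ?_⟩
          intro x hx
          have hxa : x = a := by
            by_contra hxa
            have : x ∈ S.erase a := Finset.mem_erase.mpr ⟨hxa, hx⟩
            rw [he] at this
            simp at this
          simp [hxa]
        · refine ⟨a, c, ?_⟩
          intro x hx
          simp only [Set.mem_insert_iff, Set.mem_singleton_iff]
          by_contra hcon
          push_neg at hcon
          have hxS : (x : Fin (4*r) × Fin (4*t)) ∈ S := hx
          have h3 : ({a, c, x} : Finset (Fin (4 * r) × Fin (4 * t))) ⊆ S := by
            intro y hy
            simp only [Finset.mem_insert, Finset.mem_singleton] at hy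
            rcases hy with rfl|rfl|rfl
            · exact ha
            · exact (Finset.mem_erase.mp hc).2
            · exact hxS
          have hcc : ({a, c, x} : Finset (Fin (4 * r) × Fin (4 * t))).card = 3 := by
            rw [Finset.card_insert_of_notMem, Finset.card_insert_of_notMem,
              Finset.card_singleton]
            · simp only [Finset.mem_singleton]
              exact fun h => hcon.2 h.symm
            · simp only [Finset.mem_insert, Finset.mem_singleton]
              push_neg
              exact ⟨(Finset.mem_erase.mp hc).1.symm, fun h => hcon.1 h.symm⟩
          have := Finset.card_le_card h3
          omega
    obtain ⟨a, b, hab⟩ := hex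
    obtain ⟨e1, e2, hm1, hm2, hne, hda, hdb⟩ := EdimAux.torus_key r t hr ht a b
    obtain ⟨v, hv, hd⟩ := hgen e1 hm1 e2 hm2 hne
    have hv2 := hab hv
    simp only [Set.mem_insert_iff, Set.mem_singleton_iff] at hv2
    rcases hv2 with rfl|rfl
    · exact hd hda
    · exact hd hdb
  constructor
  · intro S hS
    exact hpart1 S (le_of_eq hS)
  · have hc1 : (cycleGraph (4*r)).Connected := EdimAux.cycle_connected (by omega)
    have hc2 : (cycleGraph (4*t)).Connected := EdimAux.cycle_connected (by omega)
    apply le_csInf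
    · exact ⟨(Finset.univ : Finset (Fin (4*r) × Fin (4*t))).card,
        Finset.univ, rfl, EdimAux.univ_gen (hc1.boxProd hc2)⟩
    · rintro k ⟨S, hcard, hgen⟩
      by_contra hk
      push_neg at hk
      exact hpart1 S (by omega) hgen
end
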